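/- Let A be a Hurwitz real n×n matrix and B a real n×m matrix. Then P := ∫₀^∞ e^{tA} B Bᵀ e^{tAᵀ} dt satisfies the algebraic Lyapunov equation A P + P Aᵀ + B Bᵀ = 0. -/

import Mathlib

open Matrix MeasureTheory

noncomputable def mexp {n : ℕ} (A : Matrix (Fin n) (Fin n) ℝ) : Matrix (Fin n) (Fin n) ℝ :=
  NormedSpace.exp A

def Hurwitz {n : ℕ} (A : Matrix (Fin n) (Fin n) ℝ) : Prop :=
  ∀ μ ∈ spectrum ℂ (A.map Complex.ofReal), μ.re < 0

namespace LyapunovAux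

open NormedSpace Filter Set
open scoped Nat

attribute [local instance] Matrix.linftyOpSemiNormedRing Matrix.linftyOpNormedRing
  Matrix.linftyOpNormedAlgebra

variable {n : ℕ}

/-- `X ↦ X *ᵥ v` as a continuous linear map. -/
noncomputable def mulVecCLM (v : Fin n → ℂ) : Matrix (Fin n) (Fin n) ℂ →L[ℂ] (Fin n → ℂ) :=
  LinearMap.toContinuousLinearMap
    { toFun := fun X => X *ᵥ v
      map_add' := fun X Y => Matrix.add_mulVec X Y v
      map_smul' := fun c X => Matrix.smul_mulVec c X v }

@[simp] lemma mulVecCLM_apply (v : Fin n → ℂ) (X : Matrix (Fin n) (Fin n) ℂ) :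
    mulVecCLM v X = X *ᵥ v := rfl

/-- exp of a matrix applied to a vector, as a tsum. -/
lemma exp_mulVec (M : Matrix (Fin n) (Fin n) ℂ) (v : Fin n → ℂ) :
    NormedSpace.exp M *ᵥ v = ∑' k : ℕ, (k !⁻¹ : ℂ) • (M ^ k *ᵥ v) := by
  have hsum : Summable fun k : ℕ => (k !⁻¹ : ℂ) • M ^ k := expSeries_summable' M
  rw [NormedSpace.exp_eq_tsum ℂ]
  have h2 := (mulVecCLM v).map_tsum hsum
  simp only [mulVecCLM_apply] at h2
  rw [h2]
  refine tsum_congr fun k => ?_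
  rw [Matrix.smul_mulVec]

lemma exp_mulVec_eq_sum (M : Matrix (Fin n) (Fin n) ℂ) (v : Fin n → ℂ) (N : ℕ)
    (hv : M ^ N *ᵥ v = 0) :
    NormedSpace.exp M *ᵥ v = ∑ k ∈ Finset.range N, (k !⁻¹ : ℂ) • (M ^ k *ᵥ v) := by
  rw [exp_mulVec]
  refine tsum_eq_sum fun k hk => ?_
  have hkN : N ≤ k := by
    by_contra h
    exact hk (Finset.mem_range.mpr (lt_of_not_ge h))
  have : M ^ k *ᵥ v = 0 := by
    have h1 : M ^ k = M ^ (k - N) * M ^ N := by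
      rw [← pow_add]
      congr 1
      omega
    rw [h1, ← Matrix.mulVec_mulVec, hv, Matrix.mulVec_zero]
  simp [this]

lemma single_term_le_exp {x : ℝ} (hx : 0 ≤ x) (k : ℕ) : x ^ k / k ! ≤ Real.exp x := by
  calc x ^ k / k ! ≤ ∑ i ∈ Finset.range (k + 1), x ^ i / i ! := by
        exact Finset.single_le_sum (f := fun i => x ^ i / i !) (fun i _ => by positivity)
          (Finset.self_mem_range_succ k)
    _ ≤ Real.exp x := Real.sum_le_exp_of_nonneg hx _

lemma genEig_bound (M : Matrix (Fin n) (Fin n) ℂ) (μ : ℂ) (hμ : μ.re < 0)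
    (v : Fin n → ℂ) (N : ℕ) (hv : (M - μ • 1) ^ N *ᵥ v = 0) :
    ∃ C : ℝ, ∀ t : ℝ, 0 ≤ t →
      ‖NormedSpace.exp ((t : ℂ) • M) *ᵥ v‖ ≤ C * Real.exp (μ.re / 2 * t) := by
  set δ : ℝ := -μ.re / 2 with hδdef
  have hδ : 0 < δ := by simp only [hδdef]; linarith
  refine ⟨∑ k ∈ Finset.range N, δ⁻¹ ^ k * ‖(M - μ • 1) ^ k *ᵥ v‖, fun t ht => ?_⟩
  -- decompose the exponential
  have hsplit : (t : ℂ) • M = ((t : ℂ) * μ) • (1 : Matrix (Fin n) (Fin n) ℂ)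
      + (t : ℂ) • (M - μ • 1) := by
    rw [smul_sub, smul_smul]
    abel
  have hcomm : Commute (((t : ℂ) * μ) • (1 : Matrix (Fin n) (Fin n) ℂ))
      ((t : ℂ) • (M - μ • 1)) := ((Commute.one_left _).smul_left _).smul_right _
  have hexp1 : NormedSpace.exp (((t : ℂ) * μ) • (1 : Matrix (Fin n) (Fin n) ℂ))
      = Complex.exp ((t : ℂ) * μ) • (1 : Matrix (Fin n) (Fin n) ℂ) := by
    rw [← Algebra.algebraMap_eq_smul_one]
    erw [← NormedSpace.algebraMap_exp_comm]
    rw [← Complex.exp_eq_exp_ℂ, Algebra.algebraMap_eq_smul_one]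
  have hnil : ((t : ℂ) • (M - μ • 1)) ^ N *ᵥ v = 0 := by
    rw [smul_pow, Matrix.smul_mulVec, hv, smul_zero]
  have key : NormedSpace.exp ((t : ℂ) • M) *ᵥ v
      = Complex.exp ((t : ℂ) * μ) •
        ∑ k ∈ Finset.range N, (k !⁻¹ : ℂ) • (((t : ℂ) • (M - μ • 1)) ^ k *ᵥ v) := by
    rw [hsplit, show NormedSpace.exp (((t : ℂ) * μ) • (1 : Matrix (Fin n) (Fin n) ℂ) + (t : ℂ) • (M - μ • 1)) = NormedSpace.exp (((t : ℂ) * μ) • (1 : Matrix (Fin n) (Fin n) ℂ)) * NormedSpace.exp ((t : ℂ) • (M - μ • 1)) from NormedSpace.exp_add_of_commute hcomm, hexp1, smul_mul_assoc, one_mul,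
      Matrix.smul_mulVec, exp_mulVec_eq_sum _ _ N hnil]
  rw [key, norm_smul]
  have habs : ‖Complex.exp ((t : ℂ) * μ)‖ = Real.exp (t * μ.re) := by
    rw [Complex.norm_exp]
    norm_num
  rw [habs]
  have hterm : ∀ k ∈ Finset.range N,
      ‖(k !⁻¹ : ℂ) • (((t : ℂ) • (M - μ • 1)) ^ k *ᵥ v)‖
        ≤ t ^ k / k ! * ‖(M - μ • 1) ^ k *ᵥ v‖ := by
    intro k _
    rw [smul_pow, Matrix.smul_mulVec, norm_smul, norm_smul]
    have h1 : ‖((t : ℂ) ^ k)‖ = t ^ k := by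
      rw [← Complex.ofReal_pow, Complex.norm_real, Real.norm_of_nonneg (pow_nonneg ht k)]
    have h2 : ‖((k !⁻¹ : ℂ))‖ = (k ! : ℝ)⁻¹ := by
      rw [← Complex.ofReal_natCast, ← Complex.ofReal_inv, Complex.norm_real]
      exact Real.norm_of_nonneg (by positivity)
    rw [h1, h2, div_eq_inv_mul, ← mul_assoc]
  have hsum_le : ‖∑ k ∈ Finset.range N, (k !⁻¹ : ℂ) • (((t : ℂ) • (M - μ • 1)) ^ k *ᵥ v)‖
      ≤ ∑ k ∈ Finset.range N, t ^ k / k ! * ‖(M - μ • 1) ^ k *ᵥ v‖ :=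
    (norm_sum_le _ _).trans (Finset.sum_le_sum hterm)
  calc Real.exp (t * μ.re) * ‖∑ k ∈ Finset.range N, (k !⁻¹ : ℂ) •
          (((t : ℂ) • (M - μ • 1)) ^ k *ᵥ v)‖
      ≤ Real.exp (t * μ.re) *
          ∑ k ∈ Finset.range N, t ^ k / k ! * ‖(M - μ • 1) ^ k *ᵥ v‖ := by
        exact mul_le_mul_of_nonneg_left hsum_le (Real.exp_nonneg _)
    _ = ∑ k ∈ Finset.range N, Real.exp (t * μ.re) * (t ^ k / k !)
          * ‖(M - μ • 1) ^ k *ᵥ v‖ := by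
        rw [Finset.mul_sum]
        refine Finset.sum_congr rfl fun k _ => ?_
        ring
    _ ≤ ∑ k ∈ Finset.range N, δ⁻¹ ^ k * ‖(M - μ • 1) ^ k *ᵥ v‖ * Real.exp (μ.re / 2 * t) := by
        refine Finset.sum_le_sum fun k _ => ?_
        have hw : (0:ℝ) ≤ ‖(M - μ • 1) ^ k *ᵥ v‖ := norm_nonneg _
        have h3 : t ^ k / k ! ≤ δ⁻¹ ^ k * Real.exp (δ * t) := by
          have h4 := single_term_le_exp (mul_nonneg hδ.le ht) k
          have h5 : (δ * t) ^ k / k ! = δ ^ k * (t ^ k / k !) := by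
            rw [mul_pow]; ring
          rw [h5] at h4
          have h6 : t ^ k / k ! = δ⁻¹ ^ k * (δ ^ k * (t ^ k / k !)) := by
            rw [← mul_assoc, ← mul_pow, inv_mul_cancel₀ hδ.ne', one_pow, one_mul]
          rw [h6]
          exact mul_le_mul_of_nonneg_left h4 (by positivity)
        have h7 : Real.exp (t * μ.re) * (t ^ k / k !) ≤ δ⁻¹ ^ k * Real.exp (μ.re / 2 * t) := by
          calc Real.exp (t * μ.re) * (t ^ k / k !)
              ≤ Real.exp (t * μ.re) * (δ⁻¹ ^ k * Real.exp (δ * t)) :=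
                mul_le_mul_of_nonneg_left h3 (Real.exp_nonneg _)
            _ = δ⁻¹ ^ k * (Real.exp (t * μ.re) * Real.exp (δ * t)) := by ring
            _ = δ⁻¹ ^ k * Real.exp (μ.re / 2 * t) := by
                rw [← Real.exp_add]
                congr 1
                rw [hδdef]; ring
        calc Real.exp (t * μ.re) * (t ^ k / k !) * ‖(M - μ • 1) ^ k *ᵥ v‖
            ≤ δ⁻¹ ^ k * Real.exp (μ.re / 2 * t) * ‖(M - μ • 1) ^ k *ᵥ v‖ :=
              mul_le_mul_of_nonneg_right h7 hw
          _ = δ⁻¹ ^ k * ‖(M - μ • 1) ^ k *ᵥ v‖ * Real.exp (μ.re / 2 * t) := by ring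
    _ = (∑ k ∈ Finset.range N, δ⁻¹ ^ k * ‖(M - μ • 1) ^ k *ᵥ v‖) * Real.exp (μ.re / 2 * t) := by
        rw [← Finset.sum_mul]
lemma decay_vec (Ac : Matrix (Fin n) (Fin n) ℂ) (hA : ∀ μ ∈ spectrum ℂ Ac, μ.re < 0)
    (v : Fin n → ℂ) :
    ∃ C c : ℝ, 0 < c ∧ ∀ t : ℝ, 0 ≤ t →
      ‖NormedSpace.exp ((t : ℂ) • Ac) *ᵥ v‖ ≤ C * Real.exp (-c * t) := by
  set f : Module.End ℂ (Fin n → ℂ) := Matrix.toLinAlgEquiv' Ac with hf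
  have hv : v ∈ ⨆ μ : ℂ, f.maxGenEigenspace μ := by
    rw [Module.End.iSup_maxGenEigenspace_eq_top]
    trivial
  refine Submodule.iSup_induction (motive := fun w => ∃ C c : ℝ, 0 < c ∧ ∀ t : ℝ, 0 ≤ t →
      ‖NormedSpace.exp ((t : ℂ) • Ac) *ᵥ w‖ ≤ C * Real.exp (-c * t))
    (fun μ => f.maxGenEigenspace μ) hv ?_ ?_ ?_
  · -- mem case
    intro μ w hw
    rcases eq_or_ne w 0 with rfl | hw0
    · exact ⟨1, 1, one_pos, fun t ht => by
        simp [Matrix.mulVec_zero, Real.exp_nonneg]⟩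
    obtain ⟨k, hk⟩ := (Module.End.mem_maxGenEigenspace f μ w).mp hw
    -- μ is in the spectrum
    have hμspec : μ ∈ spectrum ℂ Ac := by
      have hgen : f.HasGenEigenvalue μ k := by
        rw [Module.End.hasGenEigenvalue_iff]
        intro hbot
        have : w ∈ Module.End.genEigenspace f μ k := by
          rw [Module.End.mem_genEigenspace_nat, LinearMap.mem_ker]
          exact hk
        rw [hbot, Submodule.mem_bot] at this
        exact hw0 this
      have heig : f.HasEigenvalue μ := Module.End.hasEigenvalue_of_hasGenEigenvalue hgen
      have := Module.End.hasEigenvalue_iff_mem_spectrum.mp heig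
      rwa [hf, AlgEquiv.spectrum_eq (Matrix.toLinAlgEquiv' (R := ℂ) (n := Fin n)) Ac] at this
    have hμre : μ.re < 0 := hA μ hμspec
    -- translate to matrix statement
    have hmat : (Ac - μ • 1) ^ k *ᵥ w = 0 := by
      have h1 : ((f - μ • 1) ^ k) w = 0 := hk
      have h2 : (f - μ • 1) ^ k = Matrix.toLinAlgEquiv' ((Ac - μ • 1) ^ k) := by
        rw [map_pow, map_sub, _root_.map_smul, _root_.map_one, hf]
      rw [h2] at h1
      rwa [Matrix.toLinAlgEquiv'_apply] at h1
    obtain ⟨C, hC⟩ := genEig_bound Ac μ hμre w k hmat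
    exact ⟨C, -μ.re / 2, by linarith, fun t ht => by
      have := hC t ht
      rwa [show -(-μ.re / 2) * t = μ.re / 2 * t by ring]⟩
  · -- zero case
    exact ⟨1, 1, one_pos, fun t ht => by simp [Matrix.mulVec_zero, Real.exp_nonneg]⟩
  · -- add case
    rintro x y ⟨Cx, cx, hcx, hx⟩ ⟨Cy, cy, hcy, hy⟩
    refine ⟨Cx + Cy, min cx cy, lt_min hcx hcy, fun t ht => ?_⟩
    have h1 : ‖NormedSpace.exp ((t : ℂ) • Ac) *ᵥ (x + y)‖
        ≤ ‖NormedSpace.exp ((t : ℂ) • Ac) *ᵥ x‖ + ‖NormedSpace.exp ((t : ℂ) • Ac) *ᵥ y‖ := by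
      rw [Matrix.mulVec_add]
      exact norm_add_le _ _
    have h2 : Real.exp (-cx * t) ≤ Real.exp (-(min cx cy) * t) := by
      apply Real.exp_le_exp.mpr
      have : min cx cy ≤ cx := min_le_left _ _
      nlinarith
    have h3 : Real.exp (-cy * t) ≤ Real.exp (-(min cx cy) * t) := by
      apply Real.exp_le_exp.mpr
      have : min cx cy ≤ cy := min_le_right _ _
      nlinarith
    have h4 := hx t ht
    have h5 := hy t ht
    have hCx : 0 ≤ Cx := by
      by_contra h
      have := (norm_nonneg (NormedSpace.exp ((t : ℂ) • Ac) *ᵥ x)).trans h4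
      nlinarith [Real.exp_pos (-cx * t)]
    have hCy : 0 ≤ Cy := by
      by_contra h
      have := (norm_nonneg (NormedSpace.exp ((t : ℂ) • Ac) *ᵥ y)).trans h5
      nlinarith [Real.exp_pos (-cy * t)]
    calc ‖NormedSpace.exp ((t : ℂ) • Ac) *ᵥ (x + y)‖
        ≤ Cx * Real.exp (-cx * t) + Cy * Real.exp (-cy * t) := h1.trans (add_le_add h4 h5)
      _ ≤ Cx * Real.exp (-(min cx cy) * t) + Cy * Real.exp (-(min cx cy) * t) :=
          add_le_add (mul_le_mul_of_nonneg_left h2 hCx) (mul_le_mul_of_nonneg_left h3 hCy)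
      _ = (Cx + Cy) * Real.exp (-(min cx cy) * t) := by ring
lemma decay_entry (Ac : Matrix (Fin n) (Fin n) ℂ) (hA : ∀ μ ∈ spectrum ℂ Ac, μ.re < 0) :
    ∃ C c : ℝ, 0 < c ∧ 0 ≤ C ∧ ∀ t : ℝ, 0 ≤ t → ∀ i j : Fin n,
      ‖NormedSpace.exp ((t : ℂ) • Ac) i j‖ ≤ C * Real.exp (-c * t) := by
  rcases Nat.eq_zero_or_pos n with hn | hn
  · exact ⟨1, 1, one_pos, zero_le_one, fun t ht i j => by
      subst hn; exact absurd i.isLt (by omega)⟩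
  have : NeZero n := ⟨by omega⟩
  choose C c hc hbound using fun j : Fin n => decay_vec Ac hA (Pi.single j 1)
  have hne : (Finset.univ : Finset (Fin n)).Nonempty := Finset.univ_nonempty
  refine ⟨∑ j, |C j|, Finset.univ.inf' hne c, ?_, ?_, ?_⟩
  · exact (Finset.lt_inf'_iff hne).mpr fun j _ => hc j
  · positivity
  intro t ht i j
  have h1 : NormedSpace.exp ((t : ℂ) • Ac) i j
      = (NormedSpace.exp ((t : ℂ) • Ac) *ᵥ Pi.single j 1) i := by
    rw [Matrix.mulVec_single]
    simp
  rw [h1]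
  calc ‖(NormedSpace.exp ((t : ℂ) • Ac) *ᵥ Pi.single j 1) i‖
      ≤ ‖NormedSpace.exp ((t : ℂ) • Ac) *ᵥ Pi.single j 1‖ :=
        norm_le_pi_norm _ i
    _ ≤ C j * Real.exp (-c j * t) := hbound j t ht
    _ ≤ |C j| * Real.exp (-c j * t) :=
        mul_le_mul_of_nonneg_right (le_abs_self _) (Real.exp_nonneg _)
    _ ≤ |C j| * Real.exp (-(Finset.univ.inf' hne c) * t) := by
        refine mul_le_mul_of_nonneg_left ?_ (abs_nonneg _)
        apply Real.exp_le_exp.mpr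
        have : Finset.univ.inf' hne c ≤ c j := Finset.inf'_le _ (Finset.mem_univ j)
        nlinarith
    _ ≤ (∑ j', |C j'|) * Real.exp (-(Finset.univ.inf' hne c) * t) := by
        refine mul_le_mul_of_nonneg_right ?_ (Real.exp_nonneg _)
        exact Finset.single_le_sum (f := fun j' => |C j'|) (fun _ _ => abs_nonneg _)
          (Finset.mem_univ j)

lemma real_decay (A : Matrix (Fin n) (Fin n) ℝ) (hA : Hurwitz A) :
    ∃ C c : ℝ, 0 < c ∧ 0 ≤ C ∧ ∀ t : ℝ, 0 ≤ t → ∀ i j : Fin n,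
      |mexp (t • A) i j| ≤ C * Real.exp (-c * t) := by
  obtain ⟨C, c, hc, hC, hb⟩ := decay_entry (A.map Complex.ofReal) hA
  refine ⟨C, c, hc, hC, fun t ht i j => ?_⟩
  have hmap : (mexp (t • A)).map Complex.ofReal
      = NormedSpace.exp ((t : ℂ) • A.map Complex.ofReal) := by
    have h1 : (mexp (t • A)).map Complex.ofReal
        = NormedSpace.exp ((t • A).map Complex.ofReal) := by
      show Complex.ofRealHom.mapMatrix (NormedSpace.exp (t • A)) = _
      exact NormedSpace.map_exp ((RingHom.mapMatrix Complex.ofRealHom : Matrix (Fin n) (Fin n) ℝ →+* Matrix (Fin n) (Fin n) ℂ))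
        (Continuous.matrix_map continuous_id Complex.continuous_ofReal) (t • A)
    have h2 : (t • A).map Complex.ofReal = (t : ℂ) • A.map Complex.ofReal := by
      ext i j
      simp [Matrix.map_apply, Complex.real_smul]
    rw [h1, h2]
  have h3 := hb t ht i j
  rw [← hmap] at h3
  simpa [Matrix.map_apply, Complex.norm_real] using h3
lemma abs_mul_entry (X Y : Matrix (Fin n) (Fin n) ℝ) (i j : Fin n) :
    |(X * Y) i j| ≤ ∑ k, |X i k| * |Y k j| := by
  rw [Matrix.mul_apply]
  refine (Finset.abs_sum_le_sum_abs _ _).trans ?_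
  exact Finset.sum_le_sum fun k _ => (abs_mul _ _).le

lemma entry_bound_three (X Y Z : Matrix (Fin n) (Fin n) ℝ) {b : ℝ} (hb : 0 ≤ b)
    (hX : ∀ i j, |X i j| ≤ b) (hZ : ∀ i j, |Z i j| ≤ b) (i j : Fin n) :
    |(X * Y * Z) i j| ≤ (∑ l, ∑ k, |Y k l|) * (b * b) := by
  calc |(X * Y * Z) i j| ≤ ∑ l, |(X * Y) i l| * |Z l j| := abs_mul_entry _ _ i j
    _ ≤ ∑ l, (∑ k, |X i k| * |Y k l|) * b := by
        refine Finset.sum_le_sum fun l _ => ?_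
        exact mul_le_mul (abs_mul_entry X Y i l) (hZ l j) (abs_nonneg _) (by positivity)
    _ ≤ ∑ l, (∑ k, b * |Y k l|) * b := by
        refine Finset.sum_le_sum fun l _ => ?_
        refine mul_le_mul_of_nonneg_right ?_ hb
        exact Finset.sum_le_sum fun k _ => mul_le_mul_of_nonneg_right (hX i k) (abs_nonneg _)
    _ = (∑ l, ∑ k, |Y k l|) * (b * b) := by
        have h : (∑ l, (∑ k, b * |Y k l|) * b) = ∑ l, (∑ k, |Y k l|) * (b * b) :=
          Finset.sum_congr rfl fun l _ => by rw [← Finset.mul_sum]; ring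
        rw [h, ← Finset.sum_mul]

lemma entry_bound_left (A0 X : Matrix (Fin n) (Fin n) ℝ) {b : ℝ} (hb : 0 ≤ b)
    (hX : ∀ i j, |X i j| ≤ b) (i j : Fin n) :
    |(A0 * X) i j| ≤ (∑ k, ∑ l, |A0 k l|) * b := by
  calc |(A0 * X) i j| ≤ ∑ k, |A0 i k| * |X k j| := abs_mul_entry _ _ i j
    _ ≤ ∑ k, |A0 i k| * b :=
        Finset.sum_le_sum fun k _ => mul_le_mul_of_nonneg_left (hX k j) (abs_nonneg _)
    _ = (∑ k, |A0 i k|) * b := by rw [Finset.sum_mul]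
    _ ≤ (∑ k, ∑ l, |A0 k l|) * b := by
        refine mul_le_mul_of_nonneg_right ?_ hb
        exact Finset.single_le_sum (f := fun k => ∑ l, |A0 k l|)
          (fun k _ => Finset.sum_nonneg fun l _ => abs_nonneg _) (Finset.mem_univ i)

lemma entry_bound_right (X A0 : Matrix (Fin n) (Fin n) ℝ) {b : ℝ} (hb : 0 ≤ b)
    (hX : ∀ i j, |X i j| ≤ b) (i j : Fin n) :
    |(X * A0) i j| ≤ (∑ k, ∑ l, |A0 k l|) * b := by
  calc |(X * A0) i j| ≤ ∑ k, |X i k| * |A0 k j| := abs_mul_entry _ _ i j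
    _ ≤ ∑ k, b * |A0 k j| :=
        Finset.sum_le_sum fun k _ => mul_le_mul_of_nonneg_right (hX i k) (abs_nonneg _)
    _ = (∑ k, |A0 k j|) * b := by rw [← Finset.mul_sum]; ring
    _ ≤ (∑ k, ∑ l, |A0 k l|) * b := by
        refine mul_le_mul_of_nonneg_right ?_ hb
        refine Finset.sum_le_sum fun k _ => ?_
        exact Finset.single_le_sum (f := fun l => |A0 k l|) (fun l _ => abs_nonneg _)
          (Finset.mem_univ j)

lemma integrableOn_of_expbound (f : ℝ → ℝ) (hf : Continuous f) {K c : ℝ} (hc : 0 < c)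
    (hbd : ∀ t : ℝ, 0 ≤ t → |f t| ≤ K * Real.exp (-c * t)) :
    IntegrableOn f (Set.Ioi (0:ℝ)) := by
  have hg : IntegrableOn (fun t => K * Real.exp (-c * t)) (Set.Ioi (0:ℝ)) :=
    (exp_neg_integrableOn_Ioi 0 hc).const_mul K
  refine hg.integrable.mono' (hf.aestronglyMeasurable.restrict) ?_
  rw [ae_restrict_iff' measurableSet_Ioi]
  exact ae_of_all _ fun t ht => by
    rw [Real.norm_eq_abs]
    exact hbd t (le_of_lt ht)

lemma tendsto_exp_decay {K c : ℝ} (hc : 0 < c) :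
    Filter.Tendsto (fun T : ℝ => K * Real.exp (-c * T)) atTop (nhds 0) := by
  have h2 : Filter.Tendsto (fun T : ℝ => -c * T) atTop atBot := by
    have h3 : Filter.Tendsto (fun T : ℝ => c * T) atTop atTop :=
      Filter.Tendsto.const_mul_atTop hc Filter.tendsto_id
    simpa [neg_mul, Function.comp_def] using Filter.tendsto_neg_atTop_atBot.comp h3
  have h1 := Real.tendsto_exp_atBot.comp h2
  have h4 : Filter.Tendsto (fun T : ℝ => Real.exp (-c * T)) atTop (nhds 0) := h1
  simpa using h4.const_mul K
/-- Entry-evaluation continuous linear map. -/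
noncomputable def entryCLM (i j : Fin n) : Matrix (Fin n) (Fin n) ℝ →L[ℝ] ℝ :=
  LinearMap.toContinuousLinearMap
    { toFun := fun M => M i j
      map_add' := fun _ _ => rfl
      map_smul' := fun _ _ => rfl }

@[simp] lemma entryCLM_apply (i j : Fin n) (M : Matrix (Fin n) (Fin n) ℝ) :
    entryCLM i j M = M i j := rfl

/-- Transpose continuous linear map. -/
noncomputable def transposeCLM :
    Matrix (Fin n) (Fin n) ℝ →L[ℝ] Matrix (Fin n) (Fin n) ℝ :=
  LinearMap.toContinuousLinearMap
    { toFun := fun M => Mᵀ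
      map_add' := fun X Y => Matrix.transpose_add X Y
      map_smul' := fun c X => Matrix.transpose_smul c X }

@[simp] lemma transposeCLM_apply (M : Matrix (Fin n) (Fin n) ℝ) :
    transposeCLM M = Mᵀ := rfl

set_option maxHeartbeats 1000000 in
theorem main {m : ℕ} (A : Matrix (Fin n) (Fin n) ℝ) (B : Matrix (Fin n) (Fin m) ℝ)
    (hA : Hurwitz A)
    (P : Matrix (Fin n) (Fin n) ℝ)
    (hP : P = Matrix.of fun i j =>
      ∫ t in Set.Ioi (0:ℝ), (mexp (t • A) * B * Bᵀ * mexp (t • Aᵀ)) i j) :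
    A * P + P * Aᵀ + B * Bᵀ = 0 := by
  classical
  obtain ⟨C, c, hc, hC, hb⟩ := real_decay A hA
  set E : ℝ → Matrix (Fin n) (Fin n) ℝ := fun t => NormedSpace.exp (t • A) with hE
  set BB : Matrix (Fin n) (Fin n) ℝ := B * Bᵀ with hBB
  set F : ℝ → Matrix (Fin n) (Fin n) ℝ := fun t => E t * BB * (E t)ᵀ with hF
  set G : ℝ → Matrix (Fin n) (Fin n) ℝ := fun t => A * F t + F t * Aᵀ with hG
  have hEb : ∀ t : ℝ, 0 ≤ t → ∀ i j, |E t i j| ≤ C * Real.exp (-c * t) := hb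
  -- the integrand is F
  have hintegrand : ∀ t : ℝ, mexp (t • A) * B * Bᵀ * mexp (t • Aᵀ) = F t := by
    intro t
    have h1 : mexp (t • Aᵀ) = (E t)ᵀ := by
      show NormedSpace.exp (t • Aᵀ) = (NormedSpace.exp (t • A))ᵀ
      rw [← Matrix.transpose_smul, Matrix.exp_transpose]
    have h2 : mexp (t • A) = E t := rfl
    rw [h1, h2, hF, hBB]
    simp only [Matrix.mul_assoc]
  -- derivatives
  have hEderiv : ∀ t : ℝ, HasDerivAt E (A * E t) t := fun t =>
    hasDerivAt_exp_smul_const' A t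
  have hETderiv : ∀ t : ℝ, HasDerivAt (fun s => (E s)ᵀ) ((A * E t)ᵀ) t := by
    intro t
    exact (transposeCLM.hasFDerivAt (x := E t)).comp_hasDerivAt t (hEderiv t)
  have hFderiv : ∀ t : ℝ, HasDerivAt F (G t) t := by
    intro t
    have h1 : HasDerivAt (fun s => E s * BB) (A * E t * BB) t := (hEderiv t).mul_const BB
    have h2 := h1.mul (hETderiv t)
    have h3 : A * E t * BB * (E t)ᵀ + E t * BB * (A * E t)ᵀ = G t := by
      rw [hG, hF, Matrix.transpose_mul]
      simp only [Matrix.mul_assoc]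
    rw [← h3]
    exact h2
  have hFij : ∀ (i j : Fin n) (t : ℝ), HasDerivAt (fun s => F s i j) (G t i j) t := by
    intro i j t
    exact ((entryCLM i j).hasFDerivAt (x := F t)).comp_hasDerivAt t (hFderiv t)
  -- continuity
  have hEcont : Continuous E := by
    have h1 : Continuous fun t : ℝ => t • A := continuous_id.smul continuous_const
    exact NormedSpace.exp_continuous.comp h1
  have hFcont : Continuous F :=
    (hEcont.matrix_mul continuous_const).matrix_mul hEcont.matrix_transpose
  have hGcont : Continuous G :=
    ((continuous_const.matrix_mul hFcont).add (hFcont.matrix_mul continuous_const))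
  -- bounds
  set SBB : ℝ := ∑ l, ∑ k, |BB k l| with hSBB
  set SA : ℝ := ∑ k, ∑ l, |A k l| with hSA
  set SAT : ℝ := ∑ k, ∑ l, |Aᵀ k l| with hSAT
  have hSBB0 : 0 ≤ SBB := Finset.sum_nonneg fun l _ => Finset.sum_nonneg fun k _ => abs_nonneg _
  have hSA0 : 0 ≤ SA := Finset.sum_nonneg fun k _ => Finset.sum_nonneg fun l _ => abs_nonneg _
  have hSAT0 : 0 ≤ SAT := Finset.sum_nonneg fun k _ => Finset.sum_nonneg fun l _ => abs_nonneg _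
  set K1 : ℝ := SBB * (C * C) with hK1
  have hK10 : 0 ≤ K1 := by positivity
  have hexple : ∀ t : ℝ, 0 ≤ t → Real.exp (-c * t) ≤ 1 := fun t ht =>
    Real.exp_le_one_iff.mpr (by nlinarith)
  have hFb : ∀ t : ℝ, 0 ≤ t → ∀ i j, |F t i j| ≤ K1 * Real.exp (-c * t) := by
    intro t ht i j
    have hEt : ∀ i' j' : Fin n, |E t i' j'| ≤ C * Real.exp (-c * t) := hEb t ht
    have hEtT : ∀ i' j' : Fin n, |(E t)ᵀ i' j'| ≤ C * Real.exp (-c * t) := fun i' j' =>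
      hEt j' i'
    have h1 := entry_bound_three (E t) BB ((E t)ᵀ) (by positivity) hEt hEtT i j
    calc |F t i j| ≤ SBB * (C * Real.exp (-c * t) * (C * Real.exp (-c * t))) := h1
      _ = (K1 * Real.exp (-c * t)) * Real.exp (-c * t) := by rw [hK1]; ring
      _ ≤ (K1 * Real.exp (-c * t)) * 1 :=
          mul_le_mul_of_nonneg_left (hexple t ht) (by positivity)
      _ = K1 * Real.exp (-c * t) := mul_one _
  have hAFb : ∀ t : ℝ, 0 ≤ t → ∀ i j, |(A * F t) i j| ≤ SA * K1 * Real.exp (-c * t) := by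
    intro t ht i j
    have h1 := entry_bound_left A (F t) (by positivity) (hFb t ht) i j
    calc |(A * F t) i j| ≤ SA * (K1 * Real.exp (-c * t)) := h1
      _ = SA * K1 * Real.exp (-c * t) := by ring
  have hFAb : ∀ t : ℝ, 0 ≤ t → ∀ i j, |(F t * Aᵀ) i j| ≤ SAT * K1 * Real.exp (-c * t) := by
    intro t ht i j
    have h1 := entry_bound_right (F t) Aᵀ (by positivity) (hFb t ht) i j
    calc |(F t * Aᵀ) i j| ≤ SAT * (K1 * Real.exp (-c * t)) := h1
      _ = SAT * K1 * Real.exp (-c * t) := by ring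
  have hGb : ∀ t : ℝ, 0 ≤ t → ∀ i j, |G t i j| ≤ (SA * K1 + SAT * K1) * Real.exp (-c * t) := by
    intro t ht i j
    have h1 : G t i j = (A * F t) i j + (F t * Aᵀ) i j := by
      simp only [hG, Matrix.add_apply]
    rw [h1]
    calc |(A * F t) i j + (F t * Aᵀ) i j| ≤ |(A * F t) i j| + |(F t * Aᵀ) i j| := abs_add_le _ _
      _ ≤ SA * K1 * Real.exp (-c * t) + SAT * K1 * Real.exp (-c * t) :=
          add_le_add (hAFb t ht i j) (hFAb t ht i j)
      _ = (SA * K1 + SAT * K1) * Real.exp (-c * t) := by ring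
  -- integrability
  have hIntF : ∀ i j : Fin n, IntegrableOn (fun t => F t i j) (Set.Ioi (0:ℝ)) := fun i j =>
    integrableOn_of_expbound _ (hFcont.matrix_elem i j) hc (fun t ht => hFb t ht i j)
  have hIntAF : ∀ i j : Fin n, IntegrableOn (fun t => (A * F t) i j) (Set.Ioi (0:ℝ)) := fun i j =>
    integrableOn_of_expbound _ ((continuous_const.matrix_mul hFcont).matrix_elem i j) hc
      (fun t ht => hAFb t ht i j)
  have hIntFA : ∀ i j : Fin n, IntegrableOn (fun t => (F t * Aᵀ) i j) (Set.Ioi (0:ℝ)) := fun i j =>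
    integrableOn_of_expbound _ ((hFcont.matrix_mul continuous_const).matrix_elem i j) hc
      (fun t ht => hFAb t ht i j)
  have hIntG : ∀ i j : Fin n, IntegrableOn (fun t => G t i j) (Set.Ioi (0:ℝ)) := fun i j =>
    integrableOn_of_expbound _ (hGcont.matrix_elem i j) hc (fun t ht => hGb t ht i j)
  -- the key integral identity
  have hkey : ∀ i j : Fin n, (∫ t in Set.Ioi (0:ℝ), G t i j) = -(BB i j) := by
    intro i j
    have hT : ∀ T : ℝ, (∫ t in (0:ℝ)..T, G t i j) = F T i j - F 0 i j := fun T =>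
      intervalIntegral.integral_eq_sub_of_hasDerivAt (fun t _ => hFij i j t)
        ((hGcont.matrix_elem i j).intervalIntegrable 0 T)
    have h1 := MeasureTheory.intervalIntegral_tendsto_integral_Ioi 0 (hIntG i j)
      Filter.tendsto_id
    simp only [hT] at h1
    have h2 : Filter.Tendsto (fun T : ℝ => F T i j) atTop (nhds 0) := by
      refine squeeze_zero_norm' ?_ (tendsto_exp_decay (K := K1) hc)
      filter_upwards [Filter.eventually_ge_atTop (0:ℝ)] with T hT0
      rw [Real.norm_eq_abs]
      exact hFb T hT0 i j
    have h3 : Filter.Tendsto (fun T : ℝ => F T i j - F 0 i j) atTop (nhds (0 - F 0 i j)) :=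
      h2.sub_const _
    have h4 := tendsto_nhds_unique h1 h3
    have hF0 : F 0 i j = BB i j := by
      have : E 0 = 1 := by
        show NormedSpace.exp ((0:ℝ) • A) = 1
        rw [zero_smul, NormedSpace.exp_zero]
      rw [hF]
      simp [this]
    rw [h4, hF0]
    ring
  -- entries of P
  have hPent : ∀ i j : Fin n, P i j = ∫ t in Set.Ioi (0:ℝ), F t i j := by
    intro i j
    rw [hP]
    simp only [Matrix.of_apply, hintegrand]
  -- assemble
  ext i j
  rw [Matrix.add_apply, Matrix.add_apply, Matrix.zero_apply, Matrix.mul_apply, Matrix.mul_apply]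
  have hAP : (∑ k, A i k * P k j) = ∫ t in Set.Ioi (0:ℝ), (A * F t) i j := by
    calc (∑ k, A i k * P k j) = ∑ k, ∫ t in Set.Ioi (0:ℝ), A i k * F t k j := by
          refine Finset.sum_congr rfl fun k _ => ?_
          rw [hPent k j, MeasureTheory.integral_const_mul]
      _ = ∫ t in Set.Ioi (0:ℝ), ∑ k, A i k * F t k j :=
          (MeasureTheory.integral_finset_sum Finset.univ fun k _ =>
            (hIntF k j).const_mul _).symm
      _ = ∫ t in Set.Ioi (0:ℝ), (A * F t) i j := by
          refine MeasureTheory.integral_congr_ae (Filter.Eventually.of_forall fun t => ?_)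
          simp only [Matrix.mul_apply]
  have hPA : (∑ k, P i k * Aᵀ k j) = ∫ t in Set.Ioi (0:ℝ), (F t * Aᵀ) i j := by
    calc (∑ k, P i k * Aᵀ k j) = ∑ k, ∫ t in Set.Ioi (0:ℝ), F t i k * Aᵀ k j := by
          refine Finset.sum_congr rfl fun k _ => ?_
          rw [hPent i k, MeasureTheory.integral_mul_const]
      _ = ∫ t in Set.Ioi (0:ℝ), ∑ k, F t i k * Aᵀ k j :=
          (MeasureTheory.integral_finset_sum Finset.univ fun k _ =>
            (hIntF i k).mul_const _).symm
      _ = ∫ t in Set.Ioi (0:ℝ), (F t * Aᵀ) i j := by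
          refine MeasureTheory.integral_congr_ae (Filter.Eventually.of_forall fun t => ?_)
          simp only [Matrix.mul_apply]
  rw [hAP, hPA]
  have hsum : (∫ t in Set.Ioi (0:ℝ), (A * F t) i j) + (∫ t in Set.Ioi (0:ℝ), (F t * Aᵀ) i j)
      = ∫ t in Set.Ioi (0:ℝ), G t i j := by
    rw [← MeasureTheory.integral_add (hIntAF i j) (hIntFA i j)]
    refine MeasureTheory.integral_congr_ae (Filter.Eventually.of_forall fun t => ?_)
    simp only [hG, Matrix.add_apply]
  rw [hsum, hkey i j]
  show -(BB i j) + (B * Bᵀ) i j = 0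
  rw [hBB]
  ring

end LyapunovAux

theorem stmt2 {n m : ℕ} (A : Matrix (Fin n) (Fin n) ℝ) (B : Matrix (Fin n) (Fin m) ℝ)
    (hA : Hurwitz A)
    (P : Matrix (Fin n) (Fin n) ℝ)
    (hP : P = Matrix.of fun i j =>
      ∫ t in Set.Ioi (0:ℝ), (mexp (t • A) * B * Bᵀ * mexp (t • Aᵀ)) i j) :
    A * P + P * Aᵀ + B * Bᵀ = 0 :=
  LyapunovAux.main A B hA P hP
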